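/- Let A = (a_ij) be an N×N real matrix with nonnegative entries and zero diagonal such that the directed graph G[A] is strongly connected. Let b_1,…,b_N ≥ 0 with b_k > 0 for at least one k, and let α_1,…,α_N ≥ 0 satisfy 2α_i b_i < 1 and d_i^+[A] · α_i/(1 − 2α_i b_i) < 1/2 for every i. For each i, let f_i : ℝ^{n_i} × ℝ^m → ℝ^{n_i} be continuously differentiable with globally bounded partial derivatives, let h_i : ℝ^{n_i} → ℝ^m be linear, and let V_i : ℝ^{n_i} → [0,∞) be continuous and radially unbounded. Let x_i, x̄_i : [0,∞) → ℝ^{n_i} be continuously differentiable with x_i'(t) = f_i(x_i(t), u_i(t)), x̄_i'(t) = f_i(x̄_i(t), ū_i(t)), outputs y_i = h_i(x_i), and suppose the reference outputs coincide: h_i(x̄_i(t)) = ȳ(t) for all i and t. Assume the coupling relation (u_i(t) − ū_i(t)) + b_i (y_i(t) − ȳ(t)) = Σ_{j=1}^N a_ij ((y_j(t) − ȳ(t)) − (y_i(t) − ȳ(t))) holds, and that the incremental dissipation inequality V_i(x_i(T) − x̄_i(T)) − V_i(x_i(0) − x̄_i(0)) ≤ ∫_0^T (⟨y_i − ȳ,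 u_i − ū_i⟩ + α_i |u_i − ū_i|²) dt holds for all T ≥ 0 and all i. Then the deviations x_i(t) − x̄_i(t) are bounded on [0,∞) and every output converges to the reference output: |y_i(t) − ȳ(t)| → 0 as t → ∞ for all i. -/

import Mathlib

open RealInnerProductSpace MeasureTheory

lemma cs_sum {ι : Type*} (s : Finset ι) (a z : ι → ℝ) (ha : ∀ i ∈ s, 0 ≤ a i)
    (hz : ∀ i ∈ s, 0 ≤ z i) :
    (∑ i ∈ s, a i * z i) ^ 2 ≤ (∑ i ∈ s, a i) * ∑ i ∈ s, a i * z i ^ 2 := by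
  refine Finset.sum_sq_le_sum_mul_sum_of_sq_eq_mul s ha
    (fun i hi => mul_nonneg (ha i hi) (sq_nonneg _)) (fun i hi => by ring)

lemma pointwise_bound {F : Type*} [NormedAddCommGroup F] [InnerProductSpace ℝ F]
    {ι : Type*} (s : Finset ι) (a : ι → ℝ) (ha : ∀ i ∈ s, 0 ≤ a i)
    (b α : ℝ) (hb : 0 ≤ b) (hα : 0 ≤ α) (hγ : 0 < 1 - 2 * α * b)
    (hdeg : (∑ j ∈ s, a j) * (α / (1 - 2 * α * b)) < 1 / 2)
    (e : ι → F) (e₀ : F) (v : F)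
    (hv : v + b • e₀ = ∑ j ∈ s, a j • (e j - e₀)) :
    ⟪e₀, v⟫ + α * ‖v‖ ^ 2 ≤
      ((1 - 2 * α * b) / 2) * ∑ j ∈ s, a j * (‖e j‖ ^ 2 - ‖e₀‖ ^ 2)
        - (b * (1 - α * b)) * ‖e₀‖ ^ 2 := by
  set w : F := ∑ j ∈ s, a j • (e j - e₀) with hw
  have hvw : v = w - b • e₀ := by rw [← hv]; abel
  set d : ℝ := ∑ j ∈ s, a j with hd
  have hd0 : 0 ≤ d := Finset.sum_nonneg ha
  set S : ℝ := ∑ j ∈ s, a j * ‖e j - e₀‖ ^ 2 with hS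
  have hS0 : 0 ≤ S := Finset.sum_nonneg fun i hi => mul_nonneg (ha i hi) (sq_nonneg _)
  -- inner e₀ w
  have hew : ⟪e₀, w⟫ = (∑ j ∈ s, a j * (‖e j‖ ^ 2 - ‖e₀‖ ^ 2)) / 2 - S / 2 := by
    rw [hw, inner_sum]
    have : ∀ j ∈ s, ⟪e₀, a j • (e j - e₀)⟫
        = a j * (‖e j‖ ^ 2 - ‖e₀‖ ^ 2) / 2 - a j * ‖e j - e₀‖ ^ 2 / 2 := by
      intro j _
      rw [real_inner_smul_right]
      have h1 : ‖e j - e₀‖ ^ 2 = ‖e j‖ ^ 2 - 2 * ⟪e j, e₀⟫ + ‖e₀‖ ^ 2 :=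
        norm_sub_sq_real _ _
      have h2 : ⟪e₀, e j - e₀⟫ = ⟪e j, e₀⟫ - ‖e₀‖ ^ 2 := by
        rw [inner_sub_right, real_inner_self_eq_norm_sq, real_inner_comm]
      rw [h2]; linear_combination (a j / 2) * h1
    rw [Finset.sum_congr rfl this, Finset.sum_sub_distrib, ← Finset.sum_div, ← Finset.sum_div]
  -- norm w squared
  have hwn : ‖w‖ ^ 2 ≤ d * S := by
    have h1 : ‖w‖ ≤ ∑ j ∈ s, a j * ‖e j - e₀‖ := by
      refine (norm_sum_le _ _).trans_eq ?_
      exact Finset.sum_congr rfl fun j hj => by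
        rw [norm_smul, Real.norm_eq_abs, abs_of_nonneg (ha j hj)]
    have h2 : (∑ j ∈ s, a j * ‖e j - e₀‖) ^ 2 ≤ d * S :=
      cs_sum s a _ ha fun i _ => norm_nonneg _
    have h3 : ‖w‖ ^ 2 ≤ (∑ j ∈ s, a j * ‖e j - e₀‖) ^ 2 := by
      apply sq_le_sq' <;> nlinarith [norm_nonneg w,
        (norm_sum_le s fun j => a j • (e j - e₀)), h1]
    linarith
  -- expand P
  have hP : ⟪e₀, v⟫ + α * ‖v‖ ^ 2
      = (1 - 2 * α * b) * ⟪e₀, w⟫ - b * (1 - α * b) * ‖e₀‖ ^ 2 + α * ‖w‖ ^ 2 := by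
    rw [hvw]
    have h1 : ‖w - b • e₀‖ ^ 2 = ‖w‖ ^ 2 - 2 * ⟪w, b • e₀⟫ + ‖b • e₀‖ ^ 2 :=
      norm_sub_sq_real _ _
    have h2 : ⟪e₀, w - b • e₀⟫ = ⟪e₀, w⟫ - b * ‖e₀‖ ^ 2 := by
      rw [inner_sub_right, real_inner_smul_right, real_inner_self_eq_norm_sq]
    have h3 : ⟪w, b • e₀⟫ = b * ⟪e₀, w⟫ := by
      rw [real_inner_smul_right, real_inner_comm]
    have h4 : ‖b • e₀‖ ^ 2 = b ^ 2 * ‖e₀‖ ^ 2 := by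
      rw [norm_smul, mul_pow, Real.norm_eq_abs, sq_abs]
    rw [h2, h1, h3, h4]; ring
  rw [hP, hew]
  -- α * ‖w‖^2 ≤ α d S < (1-2αb)/2 * S
  have h5 : α * ‖w‖ ^ 2 ≤ α * (d * S) := by nlinarith
  have h6 : α * d ≤ (1 - 2 * α * b) / 2 := by
    rw [← mul_div_assoc, div_lt_iff₀ hγ] at hdeg
    nlinarith
  nlinarith [mul_le_mul_of_nonneg_right h6 hS0]

/-- One step of the max principle. -/
lemma maxp_step {N : ℕ} (A : Fin N → Fin N → ℝ) (hA : ∀ i j, 0 ≤ A i j)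
    (B K Q : Fin N → ℝ) (hQ : ∀ i, 0 ≤ Q i) (hB : ∀ i, 0 ≤ B i)
    (hineq : ∀ i, (∑ j, A i j) * Q i + B i * Q i ≤ (∑ j, A i j * Q j) + K i)
    (M : ℝ) (hM : ∀ l, Q l ≤ M)
    {i j : Fin N} (hij : 0 < A i j) (c : ℝ) (hc : 0 ≤ c) (hQi : M - c ≤ Q i) :
    M - ((∑ l, A i l) * c + K i) / (A i j) ≤ Q j := by
  set d : ℝ := ∑ l, A i l with hd
  have hdj : A i j ≤ d := Finset.single_le_sum (fun l _ => hA i l) (Finset.mem_univ j)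
  have hd0 : 0 ≤ d := le_trans hij.le hdj
  have hsum : ∑ l, A i l * Q l ≤ (d - A i j) * M + A i j * Q j := by
    have : ∑ l, A i l * Q l
        = (∑ l ∈ Finset.univ.erase j, A i l * Q l) + A i j * Q j := by
      rw [Finset.sum_erase_add _ _ (Finset.mem_univ j)]
    rw [this]
    have h1 : ∑ l ∈ Finset.univ.erase j, A i l * Q l
        ≤ ∑ l ∈ Finset.univ.erase j, A i l * M := by
      refine Finset.sum_le_sum fun l _ => mul_le_mul_of_nonneg_left (hM l) (hA i l)
    have h2 : ∑ l ∈ Finset.univ.erase j, A i l * M = (d - A i j) * M := by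
      rw [← Finset.sum_mul]
      congr 1
      rw [hd, ← Finset.sum_erase_add _ _ (Finset.mem_univ j)]
      ring
    linarith
  have h3 : d * (M - c) ≤ d * Q i := mul_le_mul_of_nonneg_left hQi hd0
  have h4 : d * Q i ≤ d * Q i + B i * Q i := by nlinarith [hB i, hQ i]
  have h5 : d * (M - c) ≤ (d - A i j) * M + A i j * Q j + K i := by
    calc d * (M - c) ≤ d * Q i + B i * Q i := le_trans h3 h4
    _ ≤ (∑ l, A i l * Q l) + K i := hineq i
    _ ≤ (d - A i j) * M + A i j * Q j + K i := by linarith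
  have h6 : A i j * (M - Q j) ≤ d * c + K i := by nlinarith
  have h7 : M - Q j ≤ (d * c + K i) / A i j := by
    rw [le_div_iff₀ hij]; nlinarith
  linarith

lemma maxp_chain {N : ℕ} (A : Fin N → Fin N → ℝ) (hA : ∀ i j, 0 ≤ A i j)
    (B K : Fin N → ℝ) (hB : ∀ i, 0 ≤ B i) (hK : ∀ i, 0 ≤ K i)
    {i j : Fin N} (hij : Relation.TransGen (fun a b => 0 < A a b) i j) :
    ∃ c : ℝ, 0 ≤ c ∧ ∀ Q : Fin N → ℝ, (∀ l, 0 ≤ Q l) →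
      (∀ l, (∑ r, A l r) * Q l + B l * Q l ≤ (∑ r, A l r * Q r) + K l) →
      ∀ M : ℝ, (∀ l, Q l ≤ M) → M ≤ Q i → M - c ≤ Q j := by
  induction hij with
  | single hr =>
    rename_i j'
    have hd0 : (0:ℝ) ≤ ∑ l, A i l := Finset.sum_nonneg fun l _ => hA i l
    refine ⟨((∑ l, A i l) * 0 + K i) / (A i j'),
      div_nonneg (by nlinarith [hK i]) hr.le, ?_⟩
    intro Q hQ hineq M hM hMi
    exact maxp_step A hA B K Q hQ hB hineq M hM hr 0 le_rfl (by linarith)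
  | tail hij2 hr ih =>
    rename_i jm j'
    obtain ⟨c, hc0, hc⟩ := ih
    have hd0 : (0:ℝ) ≤ ∑ l, A jm l := Finset.sum_nonneg fun l _ => hA jm l
    refine ⟨((∑ l, A jm l) * c + K jm) / (A jm j'),
      div_nonneg (by nlinarith [hK jm]) hr.le, ?_⟩
    intro Q hQ hineq M hM hMi
    exact maxp_step A hA B K Q hQ hB hineq M hM hr c hc0
      (hc Q hQ hineq M hM hMi)

lemma maxp {N : ℕ} (A : Fin N → Fin N → ℝ) (hA : ∀ i j, 0 ≤ A i j)
    (k : Fin N) (hconn : ∀ i, i ≠ k → Relation.TransGen (fun a b => 0 < A a b) i k)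
    (B K : Fin N → ℝ) (hB : ∀ i, 0 ≤ B i) (hK : ∀ i, 0 ≤ K i) (hBk : 0 < B k) :
    ∃ C : ℝ, ∀ Q : Fin N → ℝ, (∀ l, 0 ≤ Q l) →
      (∀ l, (∑ r, A l r) * Q l + B l * Q l ≤ (∑ r, A l r * Q r) + K l) →
      ∀ i, Q i ≤ C := by
  have hne : Nonempty (Fin N) := ⟨k⟩
  have hcc : ∀ i : Fin N, ∃ c : ℝ, 0 ≤ c ∧ ∀ Q : Fin N → ℝ, (∀ l, 0 ≤ Q l) →
      (∀ l, (∑ r, A l r) * Q l + B l * Q l ≤ (∑ r, A l r * Q r) + K l) →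
      ∀ M : ℝ, (∀ l, Q l ≤ M) → M ≤ Q i → M - c ≤ Q k := by
    intro i
    by_cases hik : i = k
    · exact ⟨0, le_rfl, fun Q _ _ M _ hMi => by
        rw [hik] at hMi; simpa using hMi⟩
    · exact maxp_chain A hA B K hB hK (hconn i hik)
  choose c hc0 hcp using hcc
  set cmax : ℝ := Finset.univ.sup' Finset.univ_nonempty c with hcm
  have hcmax : ∀ i, c i ≤ cmax := fun i => Finset.le_sup' c (Finset.mem_univ i)
  have hcmax0 : 0 ≤ cmax := le_trans (hc0 k) (hcmax k)
  set dk : ℝ := ∑ l, A k l with hdk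
  have hdk0 : 0 ≤ dk := Finset.sum_nonneg fun l _ => hA k l
  refine ⟨(dk * cmax + K k) / B k + cmax, ?_⟩
  intro Q hQ hineq i
  set M : ℝ := Finset.univ.sup' Finset.univ_nonempty Q with hMdef
  obtain ⟨i₀, _, hi₀⟩ := Finset.exists_mem_eq_sup' Finset.univ_nonempty Q
  have hM : ∀ l, Q l ≤ M := fun l => Finset.le_sup' Q (Finset.mem_univ l)
  have hk2 : M - c i₀ ≤ Q k := hcp i₀ Q hQ hineq M hM (le_of_eq hi₀)
  have hsum : ∑ l, A k l * Q l ≤ dk * M := by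
    rw [hdk, Finset.sum_mul]
    exact Finset.sum_le_sum fun l _ => mul_le_mul_of_nonneg_left (hM l) (hA k l)
  have h1 : dk * M ≤ dk * (Q k + c i₀) := by
    apply mul_le_mul_of_nonneg_left _ hdk0
    linarith
  have h2 : B k * Q k ≤ dk * c i₀ + K k := by
    have := hineq k
    nlinarith [mul_le_mul_of_nonneg_left (hM k) hdk0]
  have h3 : Q k ≤ (dk * c i₀ + K k) / B k := by
    rw [le_div_iff₀ hBk]; nlinarith
  have h4 : (dk * c i₀ + K k) / B k ≤ (dk * cmax + K k) / B k := by
    have h5 : dk * c i₀ ≤ dk * cmax := mul_le_mul_of_nonneg_left (hcmax i₀) hdk0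
    gcongr
  calc Q i ≤ M := hM i
  _ ≤ Q k + c i₀ := by linarith
  _ ≤ (dk * c i₀ + K k) / B k + cmax := by linarith [hcmax i₀]
  _ ≤ (dk * cmax + K k) / B k + cmax := by linarith

lemma barbalat {g : ℝ → ℝ} (hg0 : ∀ t, 0 ≤ g t) (hgc : Continuous g)
    (L C : ℝ) (hLip : ∀ s t, 0 ≤ s → s ≤ t → |g t - g s| ≤ L * (t - s))
    (hInt : ∀ T, 0 ≤ T → (∫ t in (0:ℝ)..T, g t) ≤ C) :
    Filter.Tendsto g Filter.atTop (nhds 0) := by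
  by_contra hnot
  rw [Metric.tendsto_atTop] at hnot
  push_neg at hnot
  obtain ⟨ε, hε, hfreq⟩ := hnot
  set K : ℝ := max L 1 with hK
  have hK0 : 0 < K := lt_of_lt_of_le one_pos (le_max_right _ _)
  set δ : ℝ := ε / (2 * K) with hδ
  have hδ0 : 0 < δ := div_pos hε (by positivity)
  set A : ℝ := δ * (ε / 2) with hA
  have hA0 : 0 < A := mul_pos hδ0 (by positivity)
  have key : ∀ n : ℕ, ∃ T : ℝ, 0 ≤ T ∧ (n : ℝ) * A ≤ ∫ t in (0:ℝ)..T, g t := by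
    intro n
    induction n with
    | zero => exact ⟨0, le_rfl, by simp⟩
    | succ n ih =>
      obtain ⟨T, hT0, hTn⟩ := ih
      obtain ⟨s, hs, hgs⟩ := hfreq T
      have hs0 : 0 ≤ s := le_trans hT0 hs
      have hgsε : ε ≤ g s := by
        have := hgs
        rwa [Real.dist_eq, sub_zero, abs_of_nonneg (hg0 s)] at this
      have hint1 : IntervalIntegrable g volume 0 T := hgc.intervalIntegrable _ _
      have hint2 : IntervalIntegrable g volume T s := hgc.intervalIntegrable _ _
      have hint3 : IntervalIntegrable g volume s (s + δ) := hgc.intervalIntegrable _ _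
      have hlow : ∀ τ ∈ Set.Icc s (s + δ), ε / 2 ≤ g τ := by
        intro τ hτ
        have h1 := hLip s τ hs0 hτ.1
        have h2 : L * (τ - s) ≤ K * δ := by
          have : L * (τ - s) ≤ K * (τ - s) := by
            apply mul_le_mul_of_nonneg_right (le_max_left _ _) (by linarith [hτ.1])
          have : K * (τ - s) ≤ K * δ := by
            apply mul_le_mul_of_nonneg_left _ hK0.le
            linarith [hτ.2]
          linarith [mul_le_mul_of_nonneg_right (le_max_left L 1) (by linarith [hτ.1] : (0:ℝ) ≤ τ - s)]
        have h3 : K * δ = ε / 2 := by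
          rw [hδ]; field_simp
        have := abs_le.1 h1
        linarith
      have hseg : δ * (ε / 2) ≤ ∫ t in s..(s + δ), g t := by
        have hconst : (∫ _ in s..(s + δ), (ε/2 : ℝ)) = δ * (ε / 2) := by
          rw [intervalIntegral.integral_const, smul_eq_mul]; ring
        rw [← hconst]
        apply intervalIntegral.integral_mono_on (by linarith)
          (intervalIntegrable_const) hint3
        intro τ hτ; exact hlow τ hτ
      have hmid : 0 ≤ ∫ t in T..s, g t :=
        intervalIntegral.integral_nonneg hs (fun τ _ => hg0 τ)
      refine ⟨s + δ, by linarith, ?_⟩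
      have hsplit : (∫ t in (0:ℝ)..(s+δ), g t)
          = (∫ t in (0:ℝ)..T, g t) + (∫ t in T..s, g t) + ∫ t in s..(s+δ), g t := by
        rw [intervalIntegral.integral_add_adjacent_intervals hint1 hint2,
            intervalIntegral.integral_add_adjacent_intervals
              (hint1.trans hint2) hint3]
      rw [hsplit]
      push_cast
      nlinarith
  obtain ⟨n, hn⟩ := exists_nat_gt (C / A)
  obtain ⟨T, hT0, hTn⟩ := key n
  have := hInt T hT0
  rw [div_lt_iff₀ hA0] at hn
  linarith

set_option maxHeartbeats 3200000 in
theorem leader_following_output_synchronization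
    (N m : ℕ) (n : Fin N → ℕ) (A : Fin N → Fin N → ℝ)
    (hA_nonneg : ∀ i j, 0 ≤ A i j)
    (hA_diag : ∀ i, A i i = 0)
    (hconn : ∀ i j : Fin N, i ≠ j → Relation.TransGen (fun a b => 0 < A a b) i j)
    (b : Fin N → ℝ)
    (hb_nonneg : ∀ i, 0 ≤ b i)
    (hb_pos : ∃ k, 0 < b k)
    (α : Fin N → ℝ)
    (hα_nonneg : ∀ i, 0 ≤ α i)
    (hαb : ∀ i, 2 * α i * b i < 1)
    (hα_deg : ∀ i, (∑ j, A i j) * (α i / (1 - 2 * α i * b i)) < 1 / 2)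
    (f : ∀ i : Fin N,
      EuclideanSpace ℝ (Fin (n i)) × EuclideanSpace ℝ (Fin m) →
        EuclideanSpace ℝ (Fin (n i)))
    (hf_smooth : ∀ i, ContDiff ℝ 1 (f i))
    (hf_bdd : ∀ i, ∃ C : ℝ, ∀ z, ‖fderiv ℝ (f i) z‖ ≤ C)
    (h : ∀ i : Fin N,
      EuclideanSpace ℝ (Fin (n i)) →ₗ[ℝ] EuclideanSpace ℝ (Fin m))
    (V : ∀ i : Fin N, EuclideanSpace ℝ (Fin (n i)) → ℝ)
    (hV_cont : ∀ i, Continuous (V i))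
    (hV_nonneg : ∀ i x, 0 ≤ V i x)
    (hV_radial : ∀ i, ∀ c : ℝ, ∃ r : ℝ, ∀ x, r ≤ ‖x‖ → c ≤ V i x)
    (x xbar : ∀ i : Fin N, ℝ → EuclideanSpace ℝ (Fin (n i)))
    (u ubar : Fin N → ℝ → EuclideanSpace ℝ (Fin m))
    (y : Fin N → ℝ → EuclideanSpace ℝ (Fin m))
    (ybar : ℝ → EuclideanSpace ℝ (Fin m))
    (hy : ∀ i t, y i t = h i (x i t))
    (hybar : ∀ i t, h i (xbar i t) = ybar t)
    (hode : ∀ i t, 0 ≤ t → HasDerivAt (x i) (f i (x i t, u i t)) t)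
    (hode_bar : ∀ i t, 0 ≤ t → HasDerivAt (xbar i) (f i (xbar i t, ubar i t)) t)
    (hx_cont : ∀ i, Continuous (x i))
    (hxbar_cont : ∀ i, Continuous (xbar i))
    (hu_cont : ∀ i, Continuous (u i))
    (hubar_cont : ∀ i, Continuous (ubar i))
    (hcoupling : ∀ i t, 0 ≤ t →
      (u i t - ubar i t) + b i • (y i t - ybar t) =
        ∑ j, A i j • ((y j t - ybar t) - (y i t - ybar t)))
    (hdiss : ∀ i, ∀ T, 0 ≤ T →
      V i (x i T - xbar i T) - V i (x i 0 - xbar i 0) ≤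
        ∫ t in (0 : ℝ)..T,
          (⟪y i t - ybar t, u i t - ubar i t⟫
            + α i * ‖u i t - ubar i t‖ ^ 2)) :
    (∀ i, ∃ C : ℝ, ∀ t, 0 ≤ t → ‖x i t - xbar i t‖ ≤ C) ∧
    (∀ i, Filter.Tendsto (fun t => ‖y i t - ybar t‖) Filter.atTop (nhds 0)) := by
  obtain ⟨k, hbk⟩ := hb_pos
  have hγ : ∀ i, 0 < 1 - 2 * α i * b i := fun i => by linarith [hαb i]
  have hγ1 : ∀ i, 1 - 2 * α i * b i ≤ 1 := fun i => by
    nlinarith [hα_nonneg i, hb_nonneg i]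
  have hd0 : ∀ i, (0:ℝ) ≤ ∑ j, A i j :=
    fun i => Finset.sum_nonneg fun j _ => hA_nonneg i j
  -- continuity facts
  have hHcont : ∀ i, Continuous fun z => h i z :=
    fun i => (h i).continuous_of_finiteDimensional
  have hybar_eq : ybar = fun t => h k (xbar k t) := funext fun t => (hybar k t).symm
  have hybar_cont : Continuous ybar := by
    rw [hybar_eq]; exact (hHcont k).comp (hxbar_cont k)
  have hy_cont : ∀ i, Continuous (y i) := fun i => by
    have : y i = fun t => h i (x i t) := funext fun t => hy i t
    rw [this]; exact (hHcont i).comp (hx_cont i)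
  have he_cont : ∀ i, Continuous fun t => y i t - ybar t :=
    fun i => (hy_cont i).sub hybar_cont
  have hq_cont : ∀ i, Continuous fun t => ‖y i t - ybar t‖ ^ 2 :=
    fun i => ((he_cont i).norm).pow 2
  have hv_cont : ∀ i, Continuous fun t => u i t - ubar i t :=
    fun i => (hu_cont i).sub (hubar_cont i)
  -- integrated quantities
  set Q : Fin N → ℝ → ℝ := fun i T => ∫ t in (0:ℝ)..T, ‖y i t - ybar t‖ ^ 2
    with hQdef
  have hQ0 : ∀ i T, 0 ≤ T → 0 ≤ Q i T := fun i T hT =>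
    intervalIntegral.integral_nonneg hT fun t _ => sq_nonneg _
  set Bc : Fin N → ℝ := fun i => b i * (1 - α i * b i) with hBcdef
  have hαb1 : ∀ i, 0 < 1 - α i * b i := fun i => by
    nlinarith [hαb i, mul_nonneg (hα_nonneg i) (hb_nonneg i)]
  have hBc0 : ∀ i, 0 ≤ Bc i := fun i => mul_nonneg (hb_nonneg i) (hαb1 i).le
  have hBck : 0 < Bc k := mul_pos hbk (hαb1 k)
  set B' : Fin N → ℝ := fun i => 2 * Bc i / (1 - 2 * α i * b i) with hB'def
  set K' : Fin N → ℝ := fun i =>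
    2 * V i (x i 0 - xbar i 0) / (1 - 2 * α i * b i) with hK'def
  have hB'0 : ∀ i, 0 ≤ B' i := fun i =>
    div_nonneg (by linarith [hBc0 i]) (hγ i).le
  have hB'k : 0 < B' k := div_pos (by linarith) (hγ k)
  have hK'0 : ∀ i, 0 ≤ K' i := fun i =>
    div_nonneg (by linarith [hV_nonneg i (x i 0 - xbar i 0)]) (hγ i).le
  -- main integrated inequality
  have hmain : ∀ i T, 0 ≤ T →
      V i (x i T - xbar i T) - V i (x i 0 - xbar i 0) ≤
        ((1 - 2 * α i * b i) / 2) *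
            ((∑ j, A i j * Q j T) - (∑ j, A i j) * Q i T) - Bc i * Q i T := by
    intro i T hT
    have hPcont : Continuous fun t =>
        (⟪y i t - ybar t, u i t - ubar i t⟫ + α i * ‖u i t - ubar i t‖ ^ 2 : ℝ) :=
      ((he_cont i).inner (hv_cont i)).add
        (continuous_const.mul ((hv_cont i).norm.pow 2))
    have hGcont : Continuous fun t =>
        ((1 - 2 * α i * b i) / 2) *
            (∑ j, A i j * (‖y j t - ybar t‖ ^ 2 - ‖y i t - ybar t‖ ^ 2))
          - (b i * (1 - α i * b i)) * ‖y i t - ybar t‖ ^ 2 :=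
      (continuous_const.mul (continuous_finset_sum _ fun j _ =>
        continuous_const.mul ((hq_cont j).sub (hq_cont i)))).sub
        (continuous_const.mul (hq_cont i))
    have h1 := hdiss i T hT
    have h2 : (∫ t in (0:ℝ)..T,
          (⟪y i t - ybar t, u i t - ubar i t⟫ + α i * ‖u i t - ubar i t‖ ^ 2))
        ≤ ∫ t in (0:ℝ)..T,
          (((1 - 2 * α i * b i) / 2) *
              (∑ j, A i j * (‖y j t - ybar t‖ ^ 2 - ‖y i t - ybar t‖ ^ 2))
            - (b i * (1 - α i * b i)) * ‖y i t - ybar t‖ ^ 2) := by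
      refine intervalIntegral.integral_mono_on hT
        (hPcont.intervalIntegrable _ _) (hGcont.intervalIntegrable _ _) ?_
      intro t htc
      exact pointwise_bound Finset.univ (A i) (fun j _ => hA_nonneg i j)
        (b i) (α i) (hb_nonneg i) (hα_nonneg i) (hγ i) (hα_deg i)
        (fun j => y j t - ybar t) (y i t - ybar t) (u i t - ubar i t)
        (hcoupling i t htc.1)
    have hqint : ∀ j, IntervalIntegrable (fun t => ‖y j t - ybar t‖ ^ 2)
        volume 0 T := fun j => (hq_cont j).intervalIntegrable _ _
    have h3 : (∫ t in (0:ℝ)..T,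
          (((1 - 2 * α i * b i) / 2) *
              (∑ j, A i j * (‖y j t - ybar t‖ ^ 2 - ‖y i t - ybar t‖ ^ 2))
            - (b i * (1 - α i * b i)) * ‖y i t - ybar t‖ ^ 2))
        = ((1 - 2 * α i * b i) / 2) *
            ((∑ j, A i j * Q j T) - (∑ j, A i j) * Q i T)
          - (b i * (1 - α i * b i)) * Q i T := by
      have e1 : (∫ t in (0:ℝ)..T,
            ∑ j, A i j * (‖y j t - ybar t‖ ^ 2 - ‖y i t - ybar t‖ ^ 2))
          = ∑ j, A i j * (Q j T - Q i T) := by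
        rw [intervalIntegral.integral_finset_sum (fun j _ =>
          (show IntervalIntegrable (fun t => A i j * (‖y j t - ybar t‖ ^ 2 - ‖y i t - ybar t‖ ^ 2)) volume 0 T from
          (continuous_const.mul ((hq_cont j).sub (hq_cont i))).intervalIntegrable _ _))]
        refine Finset.sum_congr rfl fun j _ => ?_
        rw [intervalIntegral.integral_const_mul,
          intervalIntegral.integral_sub (hqint j) (hqint i)]
      rw [intervalIntegral.integral_sub
        (show IntervalIntegrable (fun t => ((1 - 2 * α i * b i) / 2) *
            (∑ j, A i j * (‖y j t - ybar t‖ ^ 2 - ‖y i t - ybar t‖ ^ 2))) volume 0 T from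
        (continuous_const.mul (continuous_finset_sum _ fun j _ =>
          continuous_const.mul ((hq_cont j).sub (hq_cont i)))).intervalIntegrable _ _)
        (show IntervalIntegrable (fun t => (b i * (1 - α i * b i)) * ‖y i t - ybar t‖ ^ 2)
            volume 0 T from
        (continuous_const.mul (hq_cont i)).intervalIntegrable _ _),
        intervalIntegral.integral_const_mul, intervalIntegral.integral_const_mul, e1]
      have e2 : ∑ j, A i j * (Q j T - Q i T)
          = (∑ j, A i j * Q j T) - (∑ j, A i j) * Q i T := by
        simp only [mul_sub]
        rw [Finset.sum_sub_distrib, Finset.sum_mul]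
      rw [e2]
    simp only [hBcdef]
    linarith [h1, h2, h3]
  have hkey : ∀ T, 0 ≤ T → ∀ i,
      (∑ j, A i j) * Q i T + B' i * Q i T ≤ (∑ j, A i j * Q j T) + K' i := by
    intro T hT i
    have hm := hmain i T hT
    have hVT := hV_nonneg i (x i T - xbar i T)
    have hγi := hγ i
    simp only [hB'def, hK'def]
    have key2 : (1 - 2 * α i * b i) *
        ((∑ j, A i j) * Q i T + 2 * Bc i / (1 - 2 * α i * b i) * Q i T) ≤
        (1 - 2 * α i * b i) *
        ((∑ j, A i j * Q j T) + 2 * V i (x i 0 - xbar i 0) / (1 - 2 * α i * b i)) := by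
      have e1 : (1 - 2 * α i * b i) *
          ((∑ j, A i j) * Q i T + 2 * Bc i / (1 - 2 * α i * b i) * Q i T)
          = (1 - 2 * α i * b i) * ((∑ j, A i j) * Q i T) + 2 * Bc i * Q i T := by
        field_simp
      have e2 : (1 - 2 * α i * b i) *
          ((∑ j, A i j * Q j T) + 2 * V i (x i 0 - xbar i 0) / (1 - 2 * α i * b i))
          = (1 - 2 * α i * b i) * (∑ j, A i j * Q j T)
            + 2 * V i (x i 0 - xbar i 0) := by
        field_simp
      rw [e1, e2]
      nlinarith [hm]
    exact le_of_mul_le_mul_left key2 hγi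
  obtain ⟨CQ, hCQ⟩ := maxp A hA_nonneg k (fun i hik => hconn i k hik) B' K'
    hB'0 hK'0 hB'k
  have hQbd : ∀ T, 0 ≤ T → ∀ i, Q i T ≤ CQ := fun T hT =>
    hCQ (fun i => Q i T) (fun i => hQ0 i T hT) (hkey T hT)
  have hCQ0 : 0 ≤ CQ := by
    have h1 := hQbd 0 le_rfl k
    have h2 : Q k 0 = 0 := intervalIntegral.integral_same
    linarith
  -- bound on V along trajectories
  have hVbd : ∀ i T, 0 ≤ T →
      V i (x i T - xbar i T) ≤
        V i (x i 0 - xbar i 0) + (∑ j, A i j) * CQ / 2 := by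
    intro i T hT
    have hm := hmain i T hT
    have hS : (∑ j, A i j * Q j T) ≤ (∑ j, A i j) * CQ := by
      rw [Finset.sum_mul]
      exact Finset.sum_le_sum fun j _ =>
        mul_le_mul_of_nonneg_left (hQbd T hT j) (hA_nonneg i j)
    have hS0 : 0 ≤ ∑ j, A i j * Q j T :=
      Finset.sum_nonneg fun j _ => mul_nonneg (hA_nonneg i j) (hQ0 j T hT)
    nlinarith [hγ i, hγ1 i, mul_nonneg (hd0 i) (hQ0 i T hT),
      mul_nonneg (hBc0 i) (hQ0 i T hT), mul_nonneg (hd0 i) hCQ0]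
  -- boundedness of the state deviations
  have hxbd : ∀ i, ∃ C, 0 ≤ C ∧ ∀ t, 0 ≤ t → ‖x i t - xbar i t‖ ≤ C := by
    intro i
    obtain ⟨r, hr⟩ := hV_radial i
      (V i (x i 0 - xbar i 0) + (∑ j, A i j) * CQ / 2 + 1)
    refine ⟨max r 0, le_max_right _ _, ?_⟩
    intro t ht
    by_contra hcon
    push_neg at hcon
    have h1 : r ≤ ‖x i t - xbar i t‖ :=
      le_trans (le_max_left _ _) hcon.le
    have h2 := hr _ h1
    have h3 := hVbd i t ht
    linarith
  choose Cx hCx0 hCxb using hxbd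
  refine ⟨fun i => ⟨Cx i, hCxb i⟩, ?_⟩
  -- output error bounds
  set Hn : Fin N → ℝ := fun i => ‖LinearMap.toContinuousLinearMap (h i)‖
    with hHndef
  have hHn0 : ∀ i, 0 ≤ Hn i := fun i => norm_nonneg _
  have he_eq : ∀ i t, y i t - ybar t = h i (x i t - xbar i t) := by
    intro i t; rw [hy i t, ← hybar i t, map_sub]
  have hHle : ∀ i (z : EuclideanSpace ℝ (Fin (n i))), ‖h i z‖ ≤ Hn i * ‖z‖ :=
    fun i z => (LinearMap.toContinuousLinearMap (h i)).le_opNorm z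
  set Ce : Fin N → ℝ := fun i => Hn i * Cx i with hCedef
  have hCe0 : ∀ i, 0 ≤ Ce i := fun i => mul_nonneg (hHn0 i) (hCx0 i)
  have heb : ∀ i t, 0 ≤ t → ‖y i t - ybar t‖ ≤ Ce i := by
    intro i t ht
    rw [he_eq i t]
    exact le_trans (hHle i _)
      (mul_le_mul_of_nonneg_left (hCxb i t ht) (hHn0 i))
  -- bound on input deviation
  set Cv : Fin N → ℝ := fun i => b i * Ce i + ∑ j, A i j * (Ce j + Ce i)
    with hCvdef
  have hvb : ∀ i t, 0 ≤ t → ‖u i t - ubar i t‖ ≤ Cv i := by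
    intro i t ht
    have hcp := hcoupling i t ht
    have hrep : u i t - ubar i t =
        (∑ j, A i j • ((y j t - ybar t) - (y i t - ybar t)))
          - b i • (y i t - ybar t) := by
      rw [← hcp]; abel
    rw [hrep]
    simp only [hCvdef]
    refine le_trans (norm_sub_le _ _) ?_
    have h1 : ‖∑ j, A i j • ((y j t - ybar t) - (y i t - ybar t))‖
        ≤ ∑ j, A i j * (Ce j + Ce i) := by
      refine le_trans (norm_sum_le _ _) (Finset.sum_le_sum fun j _ => ?_)
      rw [norm_smul, Real.norm_eq_abs, abs_of_nonneg (hA_nonneg i j)]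
      refine mul_le_mul_of_nonneg_left ?_ (hA_nonneg i j)
      exact le_trans (norm_sub_le _ _) (add_le_add (heb j t ht) (heb i t ht))
    have h2 : ‖b i • (y i t - ybar t)‖ ≤ b i * Ce i := by
      rw [norm_smul, Real.norm_eq_abs, abs_of_nonneg (hb_nonneg i)]
      exact mul_le_mul_of_nonneg_left (heb i t ht) (hb_nonneg i)
    linarith
  -- Lipschitz bound for f
  have hfl : ∀ i, ∃ Cf, 0 ≤ Cf ∧ ∀ z w : EuclideanSpace ℝ (Fin (n i)) × EuclideanSpace ℝ (Fin m),
      ‖f i z - f i w‖ ≤ Cf * (‖z.1 - w.1‖ + ‖z.2 - w.2‖) := by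
    intro i
    obtain ⟨Cfi, hCf⟩ := hf_bdd i
    have hCf0 : 0 ≤ Cfi := le_trans (norm_nonneg _) (hCf 0)
    have hlip : LipschitzWith (Real.toNNReal Cfi) (f i) := by
      refine lipschitzWith_of_nnnorm_fderiv_le
        ((hf_smooth i).differentiable one_ne_zero) ?_
      intro z
      rw [← NNReal.coe_le_coe, coe_nnnorm, Real.coe_toNNReal _ hCf0]
      exact hCf z
    refine ⟨Cfi, hCf0, ?_⟩
    intro z w
    have h1 := hlip.dist_le_mul z w
    rw [Real.coe_toNNReal _ hCf0, dist_eq_norm] at h1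
    have h2 : dist z w ≤ ‖z.1 - w.1‖ + ‖z.2 - w.2‖ := by
      rw [Prod.dist_eq, dist_eq_norm, dist_eq_norm]
      exact max_le (le_add_of_nonneg_right (norm_nonneg _))
        (le_add_of_nonneg_left (norm_nonneg _))
    calc ‖f i z - f i w‖ ≤ Cfi * dist z w := h1
    _ ≤ Cfi * (‖z.1 - w.1‖ + ‖z.2 - w.2‖) :=
      mul_le_mul_of_nonneg_left h2 hCf0
  choose Cf hCf0 hCfl using hfl
  -- derivative of the output error
  have hedv : ∀ i t, 0 ≤ t → HasDerivAt (fun τ => y i τ - ybar τ)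
      (h i (f i (x i t, u i t)) - h i (f i (xbar i t, ubar i t))) t := by
    intro i t ht
    have he_eq2 : (fun τ => y i τ - ybar τ)
        = fun τ => h i (x i τ) - h i (xbar i τ) :=
      funext fun τ => by rw [hy i τ, hybar i τ]
    rw [he_eq2]
    have hd1 : HasDerivAt (fun τ => h i (x i τ)) (h i (f i (x i t, u i t))) t := by
      have := (LinearMap.toContinuousLinearMap (h i)).hasFDerivAt
        (x := x i t) |>.comp_hasDerivAt t (hode i t ht)
      exact this
    have hd2 : HasDerivAt (fun τ => h i (xbar i τ))
        (h i (f i (xbar i t, ubar i t))) t := by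
      have := (LinearMap.toContinuousLinearMap (h i)).hasFDerivAt
        (x := xbar i t) |>.comp_hasDerivAt t (hode_bar i t ht)
      exact this
    exact hd1.sub hd2
  set Le : Fin N → ℝ := fun i => Hn i * (Cf i * (Cx i + Cv i)) with hLedef
  have hedb : ∀ i t, 0 ≤ t →
      ‖h i (f i (x i t, u i t)) - h i (f i (xbar i t, ubar i t))‖ ≤ Le i := by
    intro i t ht
    rw [← map_sub]
    refine le_trans (hHle i _) ?_
    simp only [hLedef]
    refine mul_le_mul_of_nonneg_left ?_ (hHn0 i)
    have h1 := hCfl i (x i t, u i t) (xbar i t, ubar i t)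
    simp only at h1
    refine le_trans h1 ?_
    refine mul_le_mul_of_nonneg_left ?_ (hCf0 i)
    exact add_le_add (hCxb i t ht) (hvb i t ht)
  -- Lipschitz property of the squared output error
  have hqlip : ∀ i s t, 0 ≤ s → s ≤ t →
      |‖y i t - ybar t‖ ^ 2 - ‖y i s - ybar s‖ ^ 2| ≤ (2 * Ce i * Le i) * (t - s) := by
    intro i s t hs hst
    set D : ℝ → EuclideanSpace ℝ (Fin m) := fun τ =>
      h i (f i (x i τ, u i τ)) - h i (f i (xbar i τ, ubar i τ)) with hD
    have hder : ∀ τ ∈ Set.Ici (0:ℝ),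
        HasDerivWithinAt (fun r => ‖y i r - ybar r‖ ^ 2)
          ((fun τ => ⟪y i τ - ybar τ, D τ⟫ + ⟪D τ, y i τ - ybar τ⟫) τ)
          (Set.Ici 0) τ := by
      intro τ hτ
      have h1 := HasDerivAt.inner ℝ (hedv i τ hτ) (hedv i τ hτ)
      have h2 : (fun r => (⟪y i r - ybar r, y i r - ybar r⟫ : ℝ))
          = fun r => ‖y i r - ybar r‖ ^ 2 :=
        funext fun r => real_inner_self_eq_norm_sq _
      rw [h2] at h1
      exact h1.hasDerivWithinAt
    have hbound : ∀ τ ∈ Set.Ici (0:ℝ),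
        ‖(⟪y i τ - ybar τ, D τ⟫ + ⟪D τ, y i τ - ybar τ⟫ : ℝ)‖
          ≤ 2 * Ce i * Le i := by
      intro τ hτ
      rw [Real.norm_eq_abs]
      have h4 : ‖y i τ - ybar τ‖ * ‖D τ‖ ≤ Ce i * Le i :=
        mul_le_mul (heb i τ hτ) (hedb i τ hτ) (norm_nonneg _) (hCe0 i)
      have h3 : |(⟪y i τ - ybar τ, D τ⟫ : ℝ)| ≤ Ce i * Le i :=
        le_trans (abs_real_inner_le_norm _ _) h4
      have h3' : |(⟪D τ, y i τ - ybar τ⟫ : ℝ)| ≤ Ce i * Le i := by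
        rw [real_inner_comm]; exact h3
      calc |(⟪y i τ - ybar τ, D τ⟫ + ⟪D τ, y i τ - ybar τ⟫ : ℝ)|
          ≤ |(⟪y i τ - ybar τ, D τ⟫ : ℝ)| + |(⟪D τ, y i τ - ybar τ⟫ : ℝ)| :=
            abs_add_le _ _
      _ ≤ 2 * Ce i * Le i := by linarith
    have hmv := Convex.norm_image_sub_le_of_norm_hasDerivWithin_le
      hder hbound (convex_Ici 0) (Set.mem_Ici.2 hs)
      (Set.mem_Ici.2 (le_trans hs hst))
    rw [Real.norm_eq_abs, Real.norm_eq_abs, abs_of_nonneg (by linarith : (0:ℝ) ≤ t - s)] at hmv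
    exact hmv
  -- Barbalat
  intro i
  have htend : Filter.Tendsto (fun t => ‖y i t - ybar t‖ ^ 2)
      Filter.atTop (nhds 0) := by
    refine barbalat (fun t => sq_nonneg _) (hq_cont i) (2 * Ce i * Le i) CQ
      (hqlip i) ?_
    intro T hT
    exact hQbd T hT i
  have h2 := (Real.continuous_sqrt.tendsto 0).comp htend
  rw [Real.sqrt_zero] at h2
  have h4 : ((fun x => Real.sqrt x) ∘ fun t => ‖y i t - ybar t‖ ^ 2)
      = fun t => ‖y i t - ybar t‖ :=
    funext fun t => Real.sqrt_sq (norm_nonneg _)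
  rw [h4] at h2
  exact h2
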